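/- Let n ≥ 1, w ∈ (0,∞)^n, p, p* ∈ (0,∞)^n, 0 < λ ≤ 1, 0 < α ≤ 1 and β > 0. Let f = max_i max(p_i/p_i*, p_i*/p_i) and suppose f^β ≤ 2. Suppose x ∈ (0,∞)^n satisfies, for every i, w_i · f^β · (f·p_i/p_i*)^{−α} ≤ x_i ≤ w_i · f^{−β} · (f·p_i*/p_i)^{α}. Define p'_i = p_i·(1 + λ·min{1, (x_i − w_i)/w_i}) for each i. Then max_i max(p'_i/p_i*, p_i*/p'_i) ≤ f^{1 − λβ/(2 ln 2)}. -/

import Mathlib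

lemma aux_exp_neg (s : ℝ) (hs0 : 0 ≤ s) (hs : s ≤ Real.log 2) :
    Real.exp (-s) ≤ 1 - s / (2 * Real.log 2) := by
  have hL : 0 < Real.log 2 := Real.log_pos one_lt_two
  set u : ℝ := s / Real.log 2 with hu_def
  have hu0 : 0 ≤ u := div_nonneg hs0 hL.le
  have hu1 : u ≤ 1 := (div_le_one hL).mpr hs
  have h := convexOn_exp.2 (Set.mem_univ (0:ℝ)) (Set.mem_univ (-Real.log 2))
    (by linarith : (0:ℝ) ≤ 1 - u) hu0 (by ring)
  simp only [smul_eq_mul, mul_zero, zero_add, Real.exp_zero] at h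
  have huL : u * Real.log 2 = s := div_mul_cancel₀ s hL.ne'
  have he : Real.exp (-Real.log 2) = 1/2 := by
    rw [Real.exp_neg, Real.exp_log two_pos]; norm_num
  rw [he] at h
  calc Real.exp (-s) = Real.exp (u * (-Real.log 2)) := by
        rw [show u * (-Real.log 2) = -s by rw [← huL]; ring]
    _ ≤ (1 - u) * 1 + u * (1/2) := by simpa using h
    _ = 1 - u/2 := by ring
    _ = 1 - s / (2 * Real.log 2) := by rw [hu_def]; ring

lemma aux_chord (y : ℝ) (hy0 : 0 ≤ y) (hy : y ≤ Real.log 2) :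
    Real.exp (y / (2 * Real.log 2)) ≤ 1 + y := by
  have hL : 0 < Real.log 2 := Real.log_pos one_lt_two
  set u : ℝ := y / Real.log 2 with hu_def
  have hu0 : 0 ≤ u := div_nonneg hy0 hL.le
  have hu1 : u ≤ 1 := (div_le_one hL).mpr hy
  have h := convexOn_exp.2 (Set.mem_univ (0:ℝ)) (Set.mem_univ ((1:ℝ)/2))
    (by linarith : (0:ℝ) ≤ 1 - u) hu0 (by ring)
  simp only [smul_eq_mul, mul_zero, zero_add, Real.exp_zero] at h
  have huL : u * Real.log 2 = y := div_mul_cancel₀ y hL.ne'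
  have harg : u * ((1:ℝ)/2) = y / (2 * Real.log 2) := by
    rw [hu_def, div_mul_div_comm, mul_one, mul_comm (Real.log 2) 2]
  rw [harg] at h
  have hexp : Real.exp ((1:ℝ)/2) ≤ 1 + Real.log 2 := by
    have h1 : Real.exp ((1:ℝ)/2) * Real.exp ((1:ℝ)/2) = Real.exp 1 := by
      rw [← Real.exp_add]; norm_num
    nlinarith [Real.exp_one_lt_d9, Real.log_two_gt_d9, Real.exp_pos ((1:ℝ)/2)]
  calc Real.exp (y / (2 * Real.log 2)) ≤ (1-u)*1 + u * Real.exp ((1:ℝ)/2) := h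
    _ ≤ 1 + u * Real.log 2 := by nlinarith
    _ = 1 + y := by rw [huL]

set_option maxHeartbeats 1000000 in
theorem stmt11 (n : ℕ) (hn : 0 < n)
    (w p pstar : Fin n → ℝ)
    (hw : ∀ i, 0 < w i) (hp : ∀ i, 0 < p i) (hpstar : ∀ i, 0 < pstar i)
    (lam α β : ℝ) (hlam0 : 0 < lam) (hlam1 : lam ≤ 1)
    (hα0 : 0 < α) (hα1 : α ≤ 1) (hβ : 0 < β)
    (f : ℝ)
    (hf : f = Finset.univ.sup'
      (Finset.univ_nonempty_iff.mpr (Fin.pos_iff_nonempty.mp hn))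
      (fun i => max (p i / pstar i) (pstar i / p i)))
    (hf2 : f ^ β ≤ 2)
    (x : Fin n → ℝ) (hx : ∀ i, 0 < x i)
    (hxlb : ∀ i, w i * f ^ β * (f * p i / pstar i) ^ (-α) ≤ x i)
    (hxub : ∀ i, x i ≤ w i * f ^ (-β) * (f * pstar i / p i) ^ α)
    (p' : Fin n → ℝ)
    (hp' : ∀ i, p' i = p i * (1 + lam * min 1 ((x i - w i) / w i))) :
    Finset.univ.sup'
      (Finset.univ_nonempty_iff.mpr (Fin.pos_iff_nonempty.mp hn))
      (fun i => max (p' i / pstar i) (pstar i / p' i)) ≤ f ^ (1 - lam * β / (2 * Real.log 2)) := by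
  have hL2 : 0 < Real.log 2 := Real.log_pos one_lt_two
  have hlog2le1 : Real.log 2 ≤ 1 := by
    nlinarith [Real.log_two_lt_d9]
  -- f ≥ 1
  have hf1 : 1 ≤ f := by
    set i0 : Fin n := ⟨0, hn⟩
    have hle : max (p i0 / pstar i0) (pstar i0 / p i0) ≤ f := by
      rw [hf]
      exact Finset.le_sup' (fun j => max (p j / pstar j) (pstar j / p j)) (Finset.mem_univ i0)
    rcases le_total 1 (p i0 / pstar i0) with h | h
    · exact le_trans h (le_trans (le_max_left _ _) hle)
    · have h2 : 1 ≤ pstar i0 / p i0 :=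
        (one_le_div (hp i0)).mpr ((div_le_one (hpstar i0)).mp h)
      exact le_trans h2 (le_trans (le_max_right _ _) hle)
  have hf0 : 0 < f := lt_of_lt_of_le one_pos hf1
  have hlogf : 0 ≤ Real.log f := Real.log_nonneg hf1
  set s : ℝ := β * Real.log f with hs_def
  have hs0 : 0 ≤ s := mul_nonneg hβ.le hlogf
  have hs2 : s ≤ Real.log 2 := by
    have h := Real.log_le_log (Real.rpow_pos_of_pos hf0 β) hf2
    rwa [Real.log_rpow hf0] at h
  have hls0 : 0 ≤ lam * s := mul_nonneg hlam0.le hs0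
  have hls2 : lam * s ≤ Real.log 2 := by nlinarith
  have key1 : Real.exp (-s) ≤ 1 - s / (2 * Real.log 2) := aux_exp_neg s hs0 hs2
  have key2 : Real.exp (lam * s / (2 * Real.log 2)) ≤ 1 + lam * s :=
    aux_chord (lam * s) hls0 hls2
  have hfpow : ∀ a : ℝ, f ^ a = Real.exp (a * Real.log f) := fun a => by
    rw [Real.rpow_def_of_pos hf0, mul_comm]
  set T : ℝ := lam * β / (2 * Real.log 2) with hT_def
  -- scalar inequality for the upper bound
  have main_ub : (1 - lam) * f + lam * f ^ ((1:ℝ) - β) ≤ f ^ (1 - T) := by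
    rw [hfpow ((1:ℝ) - β), hfpow (1 - T)]
    have e1 : Real.exp (((1:ℝ) - β) * Real.log f) = f * Real.exp (-s) := by
      rw [show ((1:ℝ) - β) * Real.log f = Real.log f + -(β * Real.log f) by ring,
        Real.exp_add, Real.exp_log hf0, hs_def]
    have e2 : Real.exp ((1 - T) * Real.log f)
        = f * Real.exp (-(lam * s / (2 * Real.log 2))) := by
      rw [show (1 - T) * Real.log f
          = Real.log f + -(lam * (β * Real.log f) / (2 * Real.log 2)) by rw [hT_def]; ring,
        Real.exp_add, Real.exp_log hf0, hs_def]
    rw [e1, e2]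
    have h3 : 1 - lam + lam * Real.exp (-s)
        ≤ Real.exp (-(lam * s / (2 * Real.log 2))) := by
      have h4 : -(lam * s / (2 * Real.log 2)) + 1
          ≤ Real.exp (-(lam * s / (2 * Real.log 2))) := Real.add_one_le_exp _
      have h5 := mul_le_mul_of_nonneg_left key1 hlam0.le
      have h6 : lam * (s / (2 * Real.log 2)) = lam * s / (2 * Real.log 2) := by ring
      nlinarith
    nlinarith [mul_le_mul_of_nonneg_left h3 hf0.le]
  -- scalar inequalities for the lower bound
  have hexpT : f ^ (T - 1) = f⁻¹ * Real.exp (lam * s / (2 * Real.log 2)) := by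
    rw [hfpow (T - 1),
      show (T - 1) * Real.log f
        = -Real.log f + lam * (β * Real.log f) / (2 * Real.log 2) by rw [hT_def]; ring,
      Real.exp_add, Real.exp_neg, Real.exp_log hf0, hs_def]
  have main_lb : f ^ (T - 1) ≤ (1 - lam) * f⁻¹ + lam * f ^ (β - (1:ℝ)) := by
    rw [hexpT, hfpow (β - (1:ℝ)),
      show (β - (1:ℝ)) * Real.log f = -Real.log f + β * Real.log f by ring,
      Real.exp_add, Real.exp_neg, Real.exp_log hf0]
    have h1 : s + 1 ≤ Real.exp s := Real.add_one_le_exp s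
    have h2 : Real.exp (lam * s / (2 * Real.log 2)) ≤ 1 - lam + lam * Real.exp s := by
      nlinarith
    have hfinv : 0 < f⁻¹ := inv_pos.mpr hf0
    nlinarith [mul_le_mul_of_nonneg_left h2 hfinv.le]
  have main_lb2 : f ^ (T - 1) ≤ f⁻¹ * (1 + lam) := by
    rw [hexpT]
    have h2 : Real.exp (lam * s / (2 * Real.log 2)) ≤ 1 + lam := by
      nlinarith
    have hfinv : 0 < f⁻¹ := inv_pos.mpr hf0
    nlinarith
  -- pointwise bounds
  apply Finset.sup'_le
  intro i _
  have hpi := hp i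
  have hpsi := hpstar i
  have hwi := hw i
  set r : ℝ := p i / pstar i with hr_def
  have hr0 : 0 < r := div_pos hpi hpsi
  have hle : max (p i / pstar i) (pstar i / p i) ≤ f := by
    rw [hf]
    exact Finset.le_sup' (fun j => max (p j / pstar j) (pstar j / p j)) (Finset.mem_univ i)
  have hrub : r ≤ f := le_trans (le_max_left _ _) hle
  have hrinv : r⁻¹ ≤ f := by
    rw [hr_def, inv_div]; exact le_trans (le_max_right _ _) hle
  have hrlb : f⁻¹ ≤ r := by
    have h1 : 1 ≤ r * f := by
      calc (1:ℝ) = r * r⁻¹ := (mul_inv_cancel₀ hr0.ne').symm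
        _ ≤ r * f := mul_le_mul_of_nonneg_left hrinv hr0.le
    rw [show f⁻¹ = 1 / f by rw [one_div], div_le_iff₀ hf0]
    linarith
  set m : ℝ := min 1 ((x i - w i) / w i) with hm_def
  have hdivw : (x i - w i) / w i = x i / w i - 1 := by field_simp
  have hm_ub : m ≤ x i / w i - 1 := by
    rw [hm_def, hdivw]; exact min_le_right _ _
  have hxub' : x i / w i ≤ f ^ (-β) * (f / r) ^ α := by
    rw [div_le_iff₀ hwi]
    have e : f * pstar i / p i = f / r := by
      rw [hr_def, div_div_eq_mul_div]
    calc x i ≤ w i * f ^ (-β) * (f * pstar i / p i) ^ α := hxub i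
      _ = f ^ (-β) * (f / r) ^ α * w i := by rw [e]; ring
  have hxlb' : f ^ β * (f * r) ^ (-α) ≤ x i / w i := by
    rw [le_div_iff₀ hwi]
    have e : f * p i / pstar i = f * r := by
      rw [hr_def, mul_div_assoc]
    calc f ^ β * (f * r) ^ (-α) * w i
        = w i * f ^ β * (f * p i / pstar i) ^ (-α) := by rw [e]; ring
      _ ≤ x i := hxlb i
  set L : ℝ := f ^ β * (f * r) ^ (-α) with hL_def
  have hLpos : 0 < L :=
    mul_pos (Real.rpow_pos_of_pos hf0 β) (Real.rpow_pos_of_pos (mul_pos hf0 hr0) (-α))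
  have hm_lb : min 1 (L - 1) ≤ m := by
    apply min_le_min le_rfl
    rw [hdivw]
    linarith [hxlb']
  have hfactor : 0 < 1 + lam * m := by
    have h1 : -1 < min 1 (L - 1) := lt_min (by norm_num) (by linarith)
    have h2 : lam * (-1) < lam * min 1 (L - 1) := (mul_lt_mul_iff_right₀ hlam0).mpr h1
    have h3 : lam * min 1 (L - 1) ≤ lam * m := mul_le_mul_of_nonneg_left hm_lb hlam0.le
    nlinarith
  have hp'pos : 0 < p' i := by
    rw [hp' i]; exact mul_pos hpi hfactor
  have hp'r : p' i / pstar i = r * (1 + lam * m) := by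
    rw [hp' i, hr_def, ← hm_def]; ring
  apply max_le
  · -- upper bound
    have h1 : p' i / pstar i ≤ (1 - lam) * r + lam * (f ^ (α - β) * r ^ ((1:ℝ) - α)) := by
      rw [hp'r]
      have e1 : r * (f ^ (-β) * (f / r) ^ α) = f ^ (α - β) * r ^ ((1:ℝ) - α) := by
        rw [Real.div_rpow hf0.le hr0.le,
          show α - β = α + -β by ring, Real.rpow_add hf0,
          show (1:ℝ) - α = 1 + -α by ring, Real.rpow_add hr0, Real.rpow_one,
          Real.rpow_neg hr0.le]
        field_simp
      have h2 : r * (1 + lam * m) ≤ r * (1 + lam * (f ^ (-β) * (f / r) ^ α - 1)) := by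
        apply mul_le_mul_of_nonneg_left _ hr0.le
        have hm_ub2 : m ≤ f ^ (-β) * (f / r) ^ α - 1 := by linarith [hm_ub, hxub']
        have := mul_le_mul_of_nonneg_left hm_ub2 hlam0.le
        linarith
      calc r * (1 + lam * m) ≤ r * (1 + lam * (f ^ (-β) * (f / r) ^ α - 1)) := h2
        _ = (1 - lam) * r + lam * (r * (f ^ (-β) * (f / r) ^ α)) := by ring
        _ = (1 - lam) * r + lam * (f ^ (α - β) * r ^ ((1:ℝ) - α)) := by rw [e1]
    have hra : r ^ ((1:ℝ) - α) ≤ f ^ ((1:ℝ) - α) :=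
      Real.rpow_le_rpow hr0.le hrub (by linarith)
    have hfab : (0:ℝ) < f ^ (α - β) := Real.rpow_pos_of_pos hf0 _
    have h3 : f ^ (α - β) * f ^ ((1:ℝ) - α) = f ^ ((1:ℝ) - β) := by
      rw [← Real.rpow_add hf0]; congr 1; ring
    have h4 : (1 - lam) * r + lam * (f ^ (α - β) * r ^ ((1:ℝ) - α))
        ≤ (1 - lam) * f + lam * f ^ ((1:ℝ) - β) := by
      rw [← h3]
      have hA := mul_le_mul_of_nonneg_left hra hfab.le
      have hB : (1 - lam) * r ≤ (1 - lam) * f :=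
        mul_le_mul_of_nonneg_left hrub (by linarith)
      have hC := mul_le_mul_of_nonneg_left hA hlam0.le
      linarith
    linarith [main_ub]
  · -- lower bound
    have hkey : f ^ (T - 1) ≤ p' i / pstar i := by
      rw [hp'r]
      rcases le_or_gt L 2 with hLle | hLgt
      · -- m ≥ L - 1
        have hm2 : L - 1 ≤ m := by
          rw [min_eq_right (by linarith : L - 1 ≤ 1)] at hm_lb
          exact hm_lb
        have e1 : r * L = f ^ (β - α) * r ^ ((1:ℝ) - α) := by
          rw [hL_def, Real.mul_rpow hf0.le hr0.le,
            show β - α = β + -α by ring, Real.rpow_add hf0,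
            show (1:ℝ) - α = 1 + -α by ring, Real.rpow_add hr0, Real.rpow_one]
          ring
        have h1 : (1 - lam) * r + lam * (r * L) ≤ r * (1 + lam * m) := by
          have := mul_le_mul_of_nonneg_left (mul_le_mul_of_nonneg_left hm2 hlam0.le) hr0.le
          nlinarith
        have hra : (f⁻¹) ^ ((1:ℝ) - α) ≤ r ^ ((1:ℝ) - α) :=
          Real.rpow_le_rpow (inv_pos.mpr hf0).le hrlb (by linarith)
        have h3 : f ^ (β - α) * (f⁻¹) ^ ((1:ℝ) - α) = f ^ (β - (1:ℝ)) := by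
          rw [← Real.rpow_neg_one f, ← Real.rpow_mul hf0.le, ← Real.rpow_add hf0]
          congr 1; ring
        have hfba : (0:ℝ) < f ^ (β - α) := Real.rpow_pos_of_pos hf0 _
        have h4 : (1 - lam) * f⁻¹ + lam * f ^ (β - (1:ℝ))
            ≤ (1 - lam) * r + lam * (f ^ (β - α) * r ^ ((1:ℝ) - α)) := by
          rw [← h3]
          have hA := mul_le_mul_of_nonneg_left hra hfba.le
          have hB : (1 - lam) * f⁻¹ ≤ (1 - lam) * r :=
            mul_le_mul_of_nonneg_left hrlb (by linarith)
          have hC := mul_le_mul_of_nonneg_left hA hlam0.le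
          linarith
        rw [e1] at h1
        linarith [main_lb]
      · -- m ≥ 1
        have hm2 : 1 ≤ m := by
          rw [min_eq_left (by linarith : (1:ℝ) ≤ L - 1)] at hm_lb
          exact hm_lb
        have h1 : f⁻¹ * (1 + lam) ≤ r * (1 + lam * m) := by
          have h2 : 1 + lam ≤ 1 + lam * m := by nlinarith
          have h3 : (0:ℝ) < 1 + lam := by linarith
          calc f⁻¹ * (1 + lam) ≤ r * (1 + lam) :=
              mul_le_mul_of_nonneg_right hrlb h3.le
            _ ≤ r * (1 + lam * m) := mul_le_mul_of_nonneg_left h2 hr0.le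
        linarith [main_lb2]
    have hfT1 : (0:ℝ) < f ^ (T - 1) := Real.rpow_pos_of_pos hf0 _
    have h1 : pstar i / p' i ≤ (f ^ (T - 1))⁻¹ := by
      rw [show pstar i / p' i = (p' i / pstar i)⁻¹ by rw [inv_div]]
      exact inv_anti₀ hfT1 hkey
    have h2 : (f ^ (T - 1))⁻¹ = f ^ (1 - T) := by
      rw [← Real.rpow_neg hf0.le, show -(T - 1) = 1 - T by ring]
    rw [h2] at h1
    exact h1
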